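/- For α ∈ ℝ, consider the 2×2 matrix A_I = [[−1+α, α],[−α, −1−α]]. Then: (i) A_I is Hurwitz stable (all eigenvalues have negative real part) for every α ∈ ℝ; and (ii) A_I is diagonally stable if and only if |α| < 1. -/

import Mathlib

open Matrix

/-- A real square matrix `A` is *diagonally stable* if there exists a diagonal matrix `D`
with positive diagonal entries such that `Aᵀ D + D A` is negative definite. -/
def DiagonallyStable {n : Type*} [Fintype n] [DecidableEq n] (A : Matrix n n ℝ) : Prop :=
  ∃ d : n → ℝ, (∀ i, 0 < d i) ∧
    (-(Aᵀ * Matrix.diagonal d + Matrix.diagonal d * A)).PosDef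

/-- the 2×2 example matrix is Hurwitz stable for every `α`,
but diagonally stable iff `|α| < 1`. -/
theorem example_two_by_two (α : ℝ)
    (A : Matrix (Fin 2) (Fin 2) ℝ) (hA : A = !![-1 + α, α; -α, -1 - α]) :
    (∀ z : ℂ, z ∈ spectrum ℂ (A.map (algebraMap ℝ ℂ)) → z.re < 0) ∧
    (DiagonallyStable A ↔ |α| < 1) := by
  subst hA
  constructor
  · intro z hz
    rw [spectrum.mem_iff] at hz
    have hz1 : z = -1 := by
      by_contra h
      apply hz
      rw [Matrix.isUnit_iff_isUnit_det]
      have hdet : ((algebraMap ℂ (Matrix (Fin 2) (Fin 2) ℂ)) z -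
          (!![-1 + α, α; -α, -1 - α]).map (algebraMap ℝ ℂ)).det = (z + 1) ^ 2 := by
        simp [Matrix.det_fin_two, Matrix.map_apply, Matrix.algebraMap_matrix_apply,
          Matrix.sub_apply]
        ring
      rw [hdet]
      have : z + 1 ≠ 0 := fun h' => h (by linear_combination h')
      exact (pow_ne_zero 2 this).isUnit
    simp [hz1]
  · constructor
    · rintro ⟨d, hd, hP⟩
      obtain ⟨hherm, hpd⟩ := Matrix.posDef_iff_dotProduct_mulVec.mp hP
      have h0 := hpd (x := ![1, 0]) (by
        intro h
        have := congrFun h 0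
        simp at this)
      have h1 := hpd (x := ![0, 1]) (by
        intro h
        have := congrFun h 1
        simp at this)
      simp [dotProduct, Matrix.mulVec, Fin.sum_univ_two, Matrix.neg_apply,
        Matrix.add_apply, Matrix.mul_apply, Matrix.diagonal, Matrix.transpose_apply, Matrix.vecHead, Matrix.vecTail] at h0 h1
      have hd0 := hd 0
      have hd1 := hd 1
      rw [abs_lt]
      constructor <;> nlinarith
    · intro hα
      refine ⟨fun _ => 1, fun _ => one_pos, Matrix.PosDef.of_dotProduct_mulVec_pos ?_ ?_⟩
      · unfold Matrix.IsHermitian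
        ext i j
        fin_cases i <;> fin_cases j <;>
          simp [Matrix.mul_apply, Matrix.diagonal, Fin.sum_univ_two, Matrix.vecHead, Matrix.vecTail]
      · intro x hx
        have hx01 : x 0 ≠ 0 ∨ x 1 ≠ 0 := by
          by_contra h
          push_neg at h
          exact hx (funext fun i => by fin_cases i <;> simp [h.1, h.2])
        rw [abs_lt] at hα
        simp [dotProduct, Matrix.mulVec, Fin.sum_univ_two, Matrix.neg_apply,
          Matrix.add_apply, Matrix.mul_apply, Matrix.diagonal, Matrix.transpose_apply, Matrix.vecHead, Matrix.vecTail]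
        rcases hx01 with h | h <;> nlinarith [sq_nonneg (x 0), sq_nonneg (x 1), mul_self_pos.mpr h]
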